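/- arXiv:1911.10658 — 3 statements merged into one kernel-verified Lean document; each statement's English description precedes it below -/
import Mathlib

section
/- Take the separation H = {1,…,k}, L = {k+1,…,d} with 1 ≤ k < d. Let P be the (k+1)×d matrix with P_{i,i} = 1 for 1 ≤ i ≤ k, P_{k+1,j} = 1 for k+1 ≤ j ≤ d, and all other entries zero. Then every PQR matrix A with respect to (H,L) factors as A = Pᵀ M P, where M is the (k+1)×(k+1) symmetric matrix with zero diagonal given by M_{i,j} = M_{j,i} = p_{i,j} for 1 ≤ i < j ≤ k, M_{i,k+1} = M_{k+1,i} = q_i for 1 ≤ i ≤ k, and M_{k+1,k+1} = 0, where p_{i,j} and q_i are the parameters of A. -/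
open Matrix Finset

/-- `A` is a PQR matrix with respect to the separation `(H, L)` of the feature
indices `{0, …, d-1}`: it is symmetric with zero diagonal, its entry `A i j`
for `i ∈ H`, `j ∈ L` depends only on `i` (a shared parameter `qᵢ`), and its
off-diagonal entries within `L` vanish. -/
def IsPQRMatrix (d : ℕ) (H L : Finset (Fin d)) (A : Matrix (Fin d) (Fin d) ℝ) : Prop :=
  (∀ i j, A i j = A j i) ∧
  (∀ i, A i i = 0) ∧
  (∀ i ∈ H, ∀ j ∈ L, ∀ j' ∈ L, A i j = A i j') ∧
  (∀ i ∈ L, ∀ j ∈ L, i ≠ j → A i j = 0)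

/-- The `(k+1) × d` projection matrix `P` for the separation
`H = {0,…,k-1}`, `L = {k,…,d-1}`:  `P i i = 1` for `i < k`,
`P k j = 1` for `j ≥ k`, and all other entries are zero. -/
def projMat (d k : ℕ) : Matrix (Fin (k + 1)) (Fin d) ℝ :=
  Matrix.of fun i j =>
    if ((i : ℕ) = (j : ℕ) ∧ (i : ℕ) < k) ∨ ((i : ℕ) = k ∧ k ≤ (j : ℕ)) then 1 else 0

/-- The `(k+1) × (k+1)` symmetric matrix `M` with zero diagonal built from the
parameters of a PQR matrix `A` (for the separation `H = {0,…,k-1}`,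
`L = {k,…,d-1}` with `k < d`):  `M i j = p_{i,j} = A i j` for `i, j < k`,
`M i k = M k i = q_i = A i k` for `i < k`, and `M k k = 0`. -/
def coreMat (d k : ℕ) (hkd : k < d) (A : Matrix (Fin d) (Fin d) ℝ) :
    Matrix (Fin (k + 1)) (Fin (k + 1)) ℝ :=
  Matrix.of fun i j =>
    if hi : (i : ℕ) < k then
      if hj : (j : ℕ) < k then A ⟨i, hi.trans hkd⟩ ⟨j, hj.trans hkd⟩
      else A ⟨i, hi.trans hkd⟩ ⟨k, hkd⟩
    else
      if hj : (j : ℕ) < k then A ⟨k, hkd⟩ ⟨j, hj.trans hkd⟩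
      else 0

/-- For the separation `H = {0,…,k-1}`, `L = {k,…,d-1}` with `1 ≤ k < d`, every
PQR matrix `A` with respect to `(H, L)` factors as `A = Pᵀ M P`, where `P` is
the projection matrix and `M` the `(k+1)×(k+1)` symmetric zero-diagonal matrix
built from the parameters `p_{i,j}`, `q_i` of `A`. -/
theorem pqr_factorization (d k : ℕ) (hk : 1 ≤ k) (hkd : k < d)
    (A : Matrix (Fin d) (Fin d) ℝ)
    (hA : IsPQRMatrix d (Finset.univ.filter fun i : Fin d => (i : ℕ) < k)
      (Finset.univ.filter fun i : Fin d => k ≤ (i : ℕ)) A) :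
    A = (projMat d k)ᵀ * coreMat d k hkd A * projMat d k := by
  obtain ⟨hsym, hdiag, hq, hL⟩ := hA
  set g : Fin d → Fin (k + 1) := fun i =>
    if h : (i : ℕ) < k then ⟨i, h.trans (Nat.lt_succ_self k)⟩ else ⟨k, Nat.lt_succ_self k⟩
    with hg
  have hP : ∀ (a : Fin (k + 1)) (i : Fin d), projMat d k a i = if a = g i then 1 else 0 := by
    intro a i
    simp only [projMat, Matrix.of_apply, hg]
    by_cases h : (i : ℕ) < k
    · rw [dif_pos h]
      by_cases hai : a = ⟨i, h.trans (Nat.lt_succ_self k)⟩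
      · subst hai; simp [h]
      · rw [if_neg hai, if_neg]
        rintro (⟨h1, _⟩ | ⟨h1, h2⟩)
        · exact hai (Fin.ext h1)
        · omega
    · rw [dif_neg h]
      by_cases hai : a = ⟨k, Nat.lt_succ_self k⟩
      · subst hai; simp; omega
      · rw [if_neg hai, if_neg]
        rintro (⟨h1, h2⟩ | ⟨h1, _⟩)
        · omega
        · exact hai (Fin.ext h1)
  ext i j
  rw [Matrix.mul_apply]
  have : ∀ b : Fin (k + 1),
      ((projMat d k)ᵀ * coreMat d k hkd A) i b = coreMat d k hkd A (g i) b := by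
    intro b
    rw [Matrix.mul_apply]
    rw [Finset.sum_eq_single (g i)]
    · simp [Matrix.transpose_apply, hP]
    · intro a _ ha
      simp [Matrix.transpose_apply, hP, ha]
    · simp
  simp only [this, hP]
  rw [Finset.sum_eq_single (g j)]
  · rw [if_pos rfl, mul_one]
    have hgv : ∀ (x : Fin d), (g x : ℕ) = if (x : ℕ) < k then (x : ℕ) else k := by
      intro x
      by_cases h : (x : ℕ) < k <;> simp [hg, h]
    have hH : ∀ x : Fin d, (x : ℕ) < k →
        x ∈ Finset.univ.filter fun i : Fin d => (i : ℕ) < k := by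
      intro x hx; simp [hx]
    have hLmem : ∀ x : Fin d, k ≤ (x : ℕ) →
        x ∈ Finset.univ.filter fun i : Fin d => k ≤ (i : ℕ) := by
      intro x hx; simp [hx]
    have hkL : (⟨k, hkd⟩ : Fin d) ∈ Finset.univ.filter fun i : Fin d => k ≤ (i : ℕ) := by
      simp
    simp only [coreMat, Matrix.of_apply]
    by_cases hi : (i : ℕ) < k <;> by_cases hj : (j : ℕ) < k
    · rw [dif_pos (by rw [hgv]; simp [hi]), dif_pos (by rw [hgv]; simp [hj])]
      congr 1 <;> apply Fin.ext <;> simp [hgv, hi, hj]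
    · rw [dif_pos (by rw [hgv]; simp [hi]), dif_neg (by rw [hgv]; simp [hj])]
      have : A i j = A i ⟨k, hkd⟩ :=
        hq i (hH i hi) j (hLmem j (le_of_not_gt hj)) ⟨k, hkd⟩ hkL
      rw [this]; congr 1; apply Fin.ext; simp [hgv, hi]
    · rw [dif_neg (by rw [hgv]; simp [hi]), dif_pos (by rw [hgv]; simp [hj])]
      have : A i j = A ⟨k, hkd⟩ j := by
        rw [hsym]
        rw [hq j (hH j hj) i (hLmem i (le_of_not_gt hi)) ⟨k, hkd⟩ hkL, hsym]
      rw [this]; congr 1; apply Fin.ext; simp [hgv, hj]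
    · rw [dif_neg (by rw [hgv]; simp [hi]), dif_neg (by rw [hgv]; simp [hj])]
      by_cases hij : i = j
      · subst hij; exact hdiag i
      · exact hL i (hLmem i (le_of_not_gt hi)) j (hLmem j (le_of_not_gt hj)) hij
  · intro b _ hb
    simp [hb]
  · simp
end

section
/- (FTRL regret bound.) Let S ⊆ ℝ^n be a nonempty, compact, convex set, let η > 0, and let R : ℝ^n → ℝ be continuous and 1-strongly convex on S with respect to the Euclidean norm. Let f₁,…,f_T : ℝ^n → ℝ be convex differentiable functions. Let θ₁ ∈ S minimize R over S and, for each t, let g_t = ∇f_t(θ_t) and let θ_{t+1} ∈ S minimize θ ↦ η Σ_{s=1}^{t} g_s · θ + R(θ) over S. Then for every u ∈ S, Σ_{t=1}^T f_t(θ_t) − Σ_{t=1}^T f_t(u) ≤ 2η Σ_{t=1}^T ‖g_t‖² + (R(u) − R(θ₁))/η. -/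
open Finset RealInnerProductSpace

lemma ftrl_aux_grad {n : ℕ} (f : EuclideanSpace ℝ (Fin n) → ℝ)
    (hf : ConvexOn ℝ Set.univ f) (hd : Differentiable ℝ f)
    (x y : EuclideanSpace ℝ (Fin n)) :
    ⟪gradient f x, y - x⟫ ≤ f y - f x := by
  set v := y - x with hv
  have h1 : HasDerivAt (fun t : ℝ => x + t • v) v 0 := by
    simpa using ((hasDerivAt_id (0:ℝ)).smul_const v).const_add x
  have h2 : HasDerivAt (fun t : ℝ => f (x + t • v)) ((fderiv ℝ f x) v) 0 := by
    have := ((hd (x + (0:ℝ) • v)).hasFDerivAt).comp_hasDerivAt (0:ℝ) h1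
    rw [zero_smul, add_zero] at this
    exact this
  have hφ : ConvexOn ℝ Set.univ (fun t : ℝ => f (x + t • v)) := by
    have h := hf.comp_affineMap (AffineMap.lineMap x y)
    have he : (f ∘ (AffineMap.lineMap x y : ℝ →ᵃ[ℝ] EuclideanSpace ℝ (Fin n)))
        = fun t : ℝ => f (x + t • v) := by
      funext t
      simp [AffineMap.lineMap_apply, hv, add_comm]
    rw [he] at h
    simpa using h
  have hslope := hφ.le_slope_of_hasDerivAt (Set.mem_univ (0:ℝ)) (Set.mem_univ (1:ℝ))
    zero_lt_one h2
  have hinner : ⟪gradient f x, v⟫ = (fderiv ℝ f x) v := by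
    show ⟪(InnerProductSpace.toDual ℝ _).symm (fderiv ℝ f x), v⟫ = _
    simp
  rw [hinner]
  simpa [slope, hv] using hslope

lemma ftrl_aux_growth {n : ℕ} {S : Set (EuclideanSpace ℝ (Fin n))}
    (F : EuclideanSpace ℝ (Fin n) → ℝ) (hF : StrongConvexOn S 1 F)
    {x : EuclideanSpace ℝ (Fin n)} (hx : x ∈ S) (hmin : ∀ y ∈ S, F x ≤ F y)
    {y : EuclideanSpace ℝ (Fin n)} (hy : y ∈ S) :
    F x + 1 / 2 * ‖y - x‖ ^ 2 ≤ F y := by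
  set D : ℝ := ‖y - x‖ ^ 2 with hD
  have hD0 : 0 ≤ D := by positivity
  have key : ∀ a : ℝ, 0 < a → a < 1 → F x + (1 - a) / 2 * D ≤ F y := by
    intro a ha ha1
    have hb : (0:ℝ) ≤ 1 - a := by linarith
    have hcomb := hF.2 hy hx ha.le hb (by ring)
    have hmem : a • y + (1 - a) • x ∈ S := hF.1 hy hx ha.le hb (by ring)
    have hle := hmin _ hmem
    simp only [smul_eq_mul] at hcomb
    have h2 : a * (F x + (1 - a) / 2 * D) ≤ a * F y := by rw [hD]; nlinarith
    exact le_of_mul_le_mul_left h2 ha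
  refine le_of_forall_pos_le_add ?_
  intro ε hε
  have hDp : (0:ℝ) < D + 1 := by linarith
  set a : ℝ := min (ε / (D + 1)) (1 / 2) with haa
  have ha : 0 < a := lt_min (by positivity) (by norm_num)
  have ha1 : a < 1 := lt_of_le_of_lt (min_le_right _ _) (by norm_num)
  have h1 := key a ha ha1
  have h2 : a ≤ ε / (D + 1) := min_le_left _ _
  have h3 : a * D ≤ ε := by
    have : a * (D + 1) ≤ ε := by
      calc a * (D + 1) ≤ (ε / (D + 1)) * (D + 1) := by
            exact mul_le_mul_of_nonneg_right h2 hDp.le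
        _ = ε := by field_simp
    nlinarith
  linarith

/-- **FTRL regret bound.**  Let `S ⊆ ℝ^n` be a nonempty, compact, convex set,
`η > 0`, and `R` a continuous regularizer that is `1`-strongly convex on `S`
w.r.t. the Euclidean norm.  Let `f 1, …, f T` be convex differentiable losses,
let `θ 1 ∈ S` minimize `R` over `S`, let `g t = ∇ (f t) (θ t)` and, for
`1 ≤ t ≤ T`, let `θ (t+1) ∈ S` minimize `θ ↦ η Σ_{s=1}^t ⟪g s, θ⟫ + R θ`
over `S`.  Then for every `u ∈ S`,
`Σ_{t=1}^T f t (θ t) − Σ_{t=1}^T f t u ≤ 2η Σ_{t=1}^T ‖g t‖² + (R u − R (θ 1))/η`. -/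
theorem ftrl_regret_bound (n T : ℕ)
    (S : Set (EuclideanSpace ℝ (Fin n))) (hS_ne : S.Nonempty)
    (hS_cpt : IsCompact S) (hS_cvx : Convex ℝ S)
    (η : ℝ) (hη : 0 < η)
    (R : EuclideanSpace ℝ (Fin n) → ℝ) (hR_cont : Continuous R)
    (hR_sc : StrongConvexOn S 1 R)
    (f : ℕ → EuclideanSpace ℝ (Fin n) → ℝ)
    (hf_cvx : ∀ t, ConvexOn ℝ Set.univ (f t))
    (hf_diff : ∀ t, Differentiable ℝ (f t))
    (θ : ℕ → EuclideanSpace ℝ (Fin n))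
    (g : ℕ → EuclideanSpace ℝ (Fin n))
    (hg : ∀ t, g t = gradient (f t) (θ t))
    (hθ1 : θ 1 ∈ S ∧ ∀ u ∈ S, R (θ 1) ≤ R u)
    (hstep : ∀ t, 1 ≤ t → t ≤ T →
      θ (t + 1) ∈ S ∧ ∀ u ∈ S,
        η * (∑ s ∈ Finset.Icc 1 t, ⟪g s, θ (t + 1)⟫) + R (θ (t + 1)) ≤
          η * (∑ s ∈ Finset.Icc 1 t, ⟪g s, u⟫) + R u) :
    ∀ u ∈ S,
      (∑ t ∈ Finset.Icc 1 T, f t (θ t)) - (∑ t ∈ Finset.Icc 1 T, f t u) ≤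
        2 * η * (∑ t ∈ Finset.Icc 1 T, ‖g t‖ ^ 2) + (R u - R (θ 1)) / η := by
  intro u hu
  set F : ℕ → EuclideanSpace ℝ (Fin n) → ℝ :=
    fun t θ' => η * (∑ s ∈ Finset.Icc 1 t, ⟪g s, θ'⟫) + R θ' with hF
  have hFsc : ∀ t, StrongConvexOn S 1 (F t) := by
    intro t
    refine ⟨hS_cvx, fun x hx y hy a b ha hb hab => ?_⟩
    have hR := hR_sc.2 hx hy ha hb hab
    have hlin : (∑ s ∈ Finset.Icc 1 t, ⟪g s, a • x + b • y⟫)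
        = a * (∑ s ∈ Finset.Icc 1 t, ⟪g s, x⟫) + b * (∑ s ∈ Finset.Icc 1 t, ⟪g s, y⟫) := by
      rw [Finset.mul_sum, Finset.mul_sum, ← Finset.sum_add_distrib]
      refine Finset.sum_congr rfl fun s _ => ?_
      rw [inner_add_right, real_inner_smul_right, real_inner_smul_right]
    simp only [smul_eq_mul] at hR ⊢
    simp only [hF, hlin]
    nlinarith [hR]
  have hmin : ∀ t, t ≤ T → θ (t + 1) ∈ S ∧ ∀ y ∈ S, F t (θ (t + 1)) ≤ F t y := by
    intro t ht
    rcases Nat.eq_zero_or_pos t with h0 | hpos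
    · subst h0
      refine ⟨hθ1.1, fun y hy => ?_⟩
      simp only [hF]
      simpa using hθ1.2 y hy
    · exact hstep t hpos ht
  have hgrow : ∀ t, t ≤ T → ∀ y ∈ S, F t (θ (t + 1)) + 1 / 2 * ‖y - θ (t + 1)‖ ^ 2 ≤ F t y :=
    fun t ht y hy => ftrl_aux_growth (F t) (hFsc t) (hmin t ht).1 (hmin t ht).2 hy
  have hstab : ∀ t, 1 ≤ t → t ≤ T → ⟪g t, θ t - θ (t + 1)⟫ ≤ η * ‖g t‖ ^ 2 := by
    intro t h1 hT
    obtain ⟨k, rfl⟩ : ∃ k, t = k + 1 := ⟨t - 1, by omega⟩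
    have hkT : k ≤ T := by omega
    have hpS : θ (k + 1) ∈ S := (hmin k hkT).1
    have hqS : θ (k + 1 + 1) ∈ S := (hmin (k + 1) hT).1
    have e1 := hgrow k hkT _ hqS
    have e2 := hgrow (k + 1) hT _ hpS
    have hsplit : ∀ z, F (k + 1) z = F k z + η * ⟪g (k + 1), z⟫ := by
      intro z
      simp only [hF]
      rw [Finset.sum_Icc_succ_top (by omega : 1 ≤ k + 1)]
      ring
    rw [hsplit, hsplit] at e2
    have hnorm : ‖θ (k + 1 + 1) - θ (k + 1)‖ = ‖θ (k + 1) - θ (k + 1 + 1)‖ := norm_sub_rev _ _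
    rw [hnorm] at e1
    set d := ‖θ (k + 1) - θ (k + 1 + 1)‖ with hdd
    have hd0 : 0 ≤ d := norm_nonneg _
    have hd2 : d ^ 2 ≤ η * ⟪g (k + 1), θ (k + 1) - θ (k + 1 + 1)⟫ := by
      rw [inner_sub_right]
      nlinarith [e1, e2]
    have hcs : ⟪g (k + 1), θ (k + 1) - θ (k + 1 + 1)⟫ ≤ ‖g (k + 1)‖ * d :=
      real_inner_le_norm _ _
    rcases le_or_gt (⟪g (k + 1), θ (k + 1) - θ (k + 1 + 1)⟫ : ℝ) 0 with hneg | hpos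
    · exact le_trans hneg (by positivity)
    · have hdpos : 0 < d := by nlinarith [norm_nonneg (g (k + 1))]
      have hdle : d ≤ η * ‖g (k + 1)‖ := by nlinarith [norm_nonneg (g (k + 1))]
      nlinarith [norm_nonneg (g (k + 1))]
  have hBTL : ∀ k, k ≤ T → ∀ w ∈ S,
      η * (∑ t ∈ Finset.Icc 1 k, ⟪g t, θ (t + 1)⟫) + R (θ 1) ≤
        η * (∑ t ∈ Finset.Icc 1 k, ⟪g t, w⟫) + R w := by
    intro k
    induction k with
    | zero => intro _ w hw; simpa using hθ1.2 w hw
    | succ k ih =>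
      intro hkT w hw
      have hk : k ≤ T := le_trans (Nat.le_succ k) hkT
      have hnextS : θ (k + 1 + 1) ∈ S := (hmin (k + 1) hkT).1
      have hihw := ih hk (θ (k + 1 + 1)) hnextS
      have hm := (hmin (k + 1) hkT).2 w hw
      simp only [hF] at hm
      rw [Finset.sum_Icc_succ_top (by omega : 1 ≤ k + 1)] at hm ⊢
      rw [Finset.sum_Icc_succ_top (by omega : 1 ≤ k + 1)] at hm ⊢
      linarith [hihw, hm]
  have hgradineq : ∀ t, f t (θ t) - f t u ≤ ⟪g t, θ t - u⟫ := by
    intro t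
    have h := ftrl_aux_grad (f t) (hf_cvx t) (hf_diff t) (θ t) u
    rw [← hg t] at h
    have hi : (⟪g t, θ t - u⟫ : ℝ) = -⟪g t, u - θ t⟫ := by
      rw [inner_sub_right, inner_sub_right]; ring
    rw [hi]; linarith
  have hsum1 : (∑ t ∈ Finset.Icc 1 T, f t (θ t)) - (∑ t ∈ Finset.Icc 1 T, f t u)
      ≤ ∑ t ∈ Finset.Icc 1 T, ⟪g t, θ t - u⟫ := by
    rw [← Finset.sum_sub_distrib]
    exact Finset.sum_le_sum fun t _ => hgradineq t
  have hsum2 : (∑ t ∈ Finset.Icc 1 T, (⟪g t, θ t - u⟫ : ℝ))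
      = (∑ t ∈ Finset.Icc 1 T, (⟪g t, θ t - θ (t + 1)⟫ : ℝ))
        + (∑ t ∈ Finset.Icc 1 T, (⟪g t, θ (t + 1) - u⟫ : ℝ)) := by
    rw [← Finset.sum_add_distrib]
    refine Finset.sum_congr rfl fun t _ => ?_
    rw [inner_sub_right, inner_sub_right, inner_sub_right]; ring
  have hsum3 : (∑ t ∈ Finset.Icc 1 T, (⟪g t, θ t - θ (t + 1)⟫ : ℝ))
      ≤ ∑ t ∈ Finset.Icc 1 T, η * ‖g t‖ ^ 2 := by
    refine Finset.sum_le_sum fun t ht => ?_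
    rw [Finset.mem_Icc] at ht
    exact hstab t ht.1 ht.2
  have hsum4 : (∑ t ∈ Finset.Icc 1 T, (⟪g t, θ (t + 1) - u⟫ : ℝ)) ≤ (R u - R (θ 1)) / η := by
    have h := hBTL T le_rfl u hu
    have he : (∑ t ∈ Finset.Icc 1 T, (⟪g t, θ (t + 1) - u⟫ : ℝ))
        = (∑ t ∈ Finset.Icc 1 T, (⟪g t, θ (t + 1)⟫ : ℝ))
          - (∑ t ∈ Finset.Icc 1 T, (⟪g t, u⟫ : ℝ)) := by
      rw [← Finset.sum_sub_distrib]
      exact Finset.sum_congr rfl fun t _ => inner_sub_right _ _ _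
    rw [he, le_div_iff₀ hη]
    nlinarith [h]
  have hsq : (0:ℝ) ≤ ∑ t ∈ Finset.Icc 1 T, ‖g t‖ ^ 2 :=
    Finset.sum_nonneg fun t _ => by positivity
  have hfin : (∑ t ∈ Finset.Icc 1 T, η * ‖g t‖ ^ 2) = η * ∑ t ∈ Finset.Icc 1 T, ‖g t‖ ^ 2 :=
    (Finset.mul_sum _ _ _).symm
  calc (∑ t ∈ Finset.Icc 1 T, f t (θ t)) - (∑ t ∈ Finset.Icc 1 T, f t u)
      ≤ ∑ t ∈ Finset.Icc 1 T, ⟪g t, θ t - u⟫ := hsum1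
    _ = _ + _ := hsum2
    _ ≤ (∑ t ∈ Finset.Icc 1 T, η * ‖g t‖ ^ 2) + (R u - R (θ 1)) / η := add_le_add hsum3 hsum4
    _ ≤ 2 * η * (∑ t ∈ Finset.Icc 1 T, ‖g t‖ ^ 2) + (R u - R (θ 1)) / η := by
        rw [hfin]; nlinarith [hsq]
end

section
/- (Optimally tuned FTRL.) Under the hypotheses of the FTRL regret bound, suppose additionally that ‖g_t‖ ≤ G for all t = 1,…,T and that R(u) − R(θ₁) ≤ D² for the comparator u ∈ S, where G, D > 0. Then, choosing the step size η = D/(G√(2T)), the FTRL iterates satisfy Σ_{t=1}^T f_t(θ_t) − Σ_{t=1}^T f_t(u) ≤ 2 D G √(2T). -/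
open Finset RealInnerProductSpace

variable {E : Type*} [NormedAddCommGroup E] [InnerProductSpace ℝ E] [CompleteSpace E]

lemma my_grad_ineq {f : E → ℝ} (hc : ConvexOn ℝ Set.univ f) (hd : Differentiable ℝ f)
    (x y : E) : f x - f y ≤ ⟪gradient f x, x - y⟫ := by
  have hF : HasFDerivAt f ((InnerProductSpace.toDual ℝ E) (gradient f x)) x :=
    hasGradientAt_iff_hasFDerivAt.mp (hd x).hasGradientAt
  have h0 : (AffineMap.lineMap x y : ℝ →ᵃ[ℝ] E) (0:ℝ) = x := AffineMap.lineMap_apply_zero x y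
  have hline : HasDerivAt (fun s : ℝ => (AffineMap.lineMap x y : ℝ →ᵃ[ℝ] E) s) (y - x) (0:ℝ) :=
    AffineMap.hasDerivAt_lineMap
  have hF' : HasFDerivAt f ((InnerProductSpace.toDual ℝ E) (gradient f x))
      ((AffineMap.lineMap x y : ℝ →ᵃ[ℝ] E) (0:ℝ)) := by rw [h0]; exact hF
  have hcomp := hF'.comp_hasDerivAt (0:ℝ) hline
  have hcvx : ConvexOn ℝ Set.univ (f ∘ (AffineMap.lineMap x y : ℝ →ᵃ[ℝ] E)) := by
    simpa using hc.comp_affineMap (AffineMap.lineMap x y : ℝ →ᵃ[ℝ] E)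
  have hs := hcvx.le_slope_of_hasDerivAt (Set.mem_univ (0:ℝ)) (Set.mem_univ (1:ℝ)) one_pos hcomp
  rw [slope_def_field] at hs
  simp only [Function.comp, AffineMap.lineMap_apply_one, AffineMap.lineMap_apply_zero,
    InnerProductSpace.toDual_apply_apply, sub_zero, div_one] at hs
  have : ⟪gradient f x, x - y⟫ = - ⟪gradient f x, y - x⟫ := by
    rw [← inner_neg_right]; congr 1; abel
  rw [this]; linarith

lemma my_strong_min {S : Set E} {φ : E → ℝ} (h : StrongConvexOn S 1 φ)
    {x : E} (hx : x ∈ S) (hmin : ∀ v ∈ S, φ x ≤ φ v) {y : E} (hy : y ∈ S) :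
    φ x + 1/2 * ‖y - x‖^2 ≤ φ y := by
  have key : ∀ a ∈ Set.Ioo (0:ℝ) 1, (1-a)/2 * ‖y - x‖^2 ≤ φ y - φ x := by
    rintro a ⟨ha0, ha1⟩
    have hb0 : (0:ℝ) ≤ 1 - a := by linarith
    have hab : a + (1 - a) = 1 := by ring
    have h2 := h.2 hy hx ha0.le hb0 hab
    have hmem : a • y + (1-a) • x ∈ S := h.1 hy hx ha0.le hb0 hab
    have h3 := hmin _ hmem
    simp only [smul_eq_mul] at h2
    have hc : a * 0 ≤ a * ((φ y - φ x) - (1-a)/2 * ‖y - x‖^2) := by nlinarith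
    have := (mul_le_mul_iff_right₀ ha0).mp hc
    linarith
  have hlim : Filter.Tendsto (fun a : ℝ => (1-a)/2 * ‖y - x‖^2) (nhdsWithin 0 (Set.Ioi 0))
      (nhds ((1-0)/2 * ‖y - x‖^2)) := by
    apply Filter.Tendsto.mono_left _ nhdsWithin_le_nhds
    exact (Continuous.tendsto (by continuity) 0)
  have hev : ∀ᶠ a in nhdsWithin (0:ℝ) (Set.Ioi 0), (1-a)/2 * ‖y - x‖^2 ≤ φ y - φ x := by
    filter_upwards [Ioo_mem_nhdsGT_of_mem (by norm_num : (0:ℝ) ∈ Set.Ico (0:ℝ) 1)] with a ha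
    exact key a ha
  have := le_of_tendsto hlim hev
  norm_num at this
  linarith

lemma my_strong_add_linear {S : Set E} {R : E → ℝ} (h : StrongConvexOn S 1 R) (w : E) :
    StrongConvexOn S 1 (fun v => ⟪w, v⟫ + R v) := by
  refine ⟨h.1, fun x hx y hy a b ha hb hab => ?_⟩
  have h2 := h.2 hx hy ha hb hab
  simp only [smul_eq_mul] at h2 ⊢
  have hw : ⟪w, a • x + b • y⟫ = a * ⟪w, x⟫ + b * ⟪w, y⟫ := by
    rw [inner_add_right, real_inner_smul_right, real_inner_smul_right]
  rw [hw]
  linarith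
set_option maxHeartbeats 1000000 in
/-- **Optimally tuned FTRL.**  Under the hypotheses of the FTRL regret bound,
if moreover `‖g t‖ ≤ G` for all `t = 1, …, T` and `R u − R (θ 1) ≤ D²` for the
comparator `u ∈ S`, with `G, D > 0`, then choosing the step size
`η = D / (G √(2T))` the FTRL iterates satisfy
`Σ_{t=1}^T f t (θ t) − Σ_{t=1}^T f t u ≤ 2 D G √(2T)`. -/
theorem ftrl_regret_bound_tuned (n T : ℕ)
    (S : Set (EuclideanSpace ℝ (Fin n))) (hS_ne : S.Nonempty)
    (hS_cpt : IsCompact S) (hS_cvx : Convex ℝ S)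
    (G D : ℝ) (hG : 0 < G) (hD : 0 < D)
    (η : ℝ) (hη : η = D / (G * Real.sqrt (2 * T)))
    (R : EuclideanSpace ℝ (Fin n) → ℝ) (hR_cont : Continuous R)
    (hR_sc : StrongConvexOn S 1 R)
    (f : ℕ → EuclideanSpace ℝ (Fin n) → ℝ)
    (hf_cvx : ∀ t, ConvexOn ℝ Set.univ (f t))
    (hf_diff : ∀ t, Differentiable ℝ (f t))
    (θ : ℕ → EuclideanSpace ℝ (Fin n))
    (g : ℕ → EuclideanSpace ℝ (Fin n))
    (hg : ∀ t, g t = gradient (f t) (θ t))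
    (hθ1 : θ 1 ∈ S ∧ ∀ u ∈ S, R (θ 1) ≤ R u)
    (hstep : ∀ t, 1 ≤ t → t ≤ T →
      θ (t + 1) ∈ S ∧ ∀ u ∈ S,
        η * (∑ s ∈ Finset.Icc 1 t, ⟪g s, θ (t + 1)⟫) + R (θ (t + 1)) ≤
          η * (∑ s ∈ Finset.Icc 1 t, ⟪g s, u⟫) + R u)
    (hGbd : ∀ t, 1 ≤ t → t ≤ T → ‖g t‖ ≤ G)
    (u : EuclideanSpace ℝ (Fin n)) (hu : u ∈ S)
    (hDbd : R u - R (θ 1) ≤ D ^ 2) :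
    (∑ t ∈ Finset.Icc 1 T, f t (θ t)) - (∑ t ∈ Finset.Icc 1 T, f t u) ≤
      2 * D * G * Real.sqrt (2 * T) := by
  rcases Nat.eq_zero_or_pos T with hT0 | hT1
  · subst hT0
    rw [Finset.Icc_eq_empty (by omega : ¬(1:ℕ) ≤ 0)]
    simp only [Finset.sum_empty, sub_zero, sub_self]
    positivity
  -- T ≥ 1 case
  have hTpos : (0:ℝ) < 2 * T := by
    have : (1:ℝ) ≤ T := by exact_mod_cast hT1
    linarith
  have hsT : 0 < Real.sqrt (2 * T) := Real.sqrt_pos.mpr hTpos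
  have hηpos : 0 < η := by rw [hη]; positivity
  set w : ℕ → EuclideanSpace ℝ (Fin n) := fun t => η • ∑ s ∈ Finset.Icc 1 t, g s with hw
  set φ' : ℕ → EuclideanSpace ℝ (Fin n) → ℝ := fun t v => ⟪w t, v⟫ + R v with hφ'
  have hφrw : ∀ t v, φ' t v = η * (∑ s ∈ Finset.Icc 1 t, ⟪g s, v⟫) + R v := by
    intro t v
    simp only [hφ', hw, real_inner_smul_left, sum_inner]
  have hmin : ∀ t, t ≤ T → θ (t+1) ∈ S ∧ ∀ v ∈ S, φ' t (θ (t+1)) ≤ φ' t v := by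
    intro t ht
    rcases Nat.eq_zero_or_pos t with rfl | ht1
    · refine ⟨hθ1.1, fun v hv => ?_⟩
      have := hθ1.2 v hv
      simp only [hφrw, Finset.Icc_eq_empty (by omega : ¬(1:ℕ) ≤ 0), Finset.sum_empty,
        mul_zero, zero_add]
      exact this
    · obtain ⟨h1, h2⟩ := hstep t ht1 ht
      exact ⟨h1, fun v hv => by rw [hφrw, hφrw]; exact h2 v hv⟩
  have hstrong : ∀ t, StrongConvexOn S 1 (φ' t) := fun t => my_strong_add_linear hR_sc (w t)
  -- Be-the-leader lemma
  have hBTL : ∀ t, t ≤ T → ∀ v ∈ S,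
      R (θ 1) + ∑ s ∈ Finset.Icc 1 t, η * ⟪g s, θ (s+1)⟫ ≤
        R v + ∑ s ∈ Finset.Icc 1 t, η * ⟪g s, v⟫ := by
    intro t
    induction t with
    | zero =>
      intro _ v hv
      simpa [Finset.Icc_eq_empty (by omega : ¬(1:ℕ) ≤ 0)] using hθ1.2 v hv
    | succ t ih =>
      intro ht v hv
      have ht' : t ≤ T := Nat.le_of_succ_le ht
      have hm := hmin (t+1) ht
      have h1 := ih ht' _ hm.1
      have h2 := hm.2 v hv
      rw [hφrw, hφrw] at h2
      have h1le : 1 ≤ t + 1 := by omega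
      simp only [Finset.sum_Icc_succ_top h1le, mul_add, Finset.mul_sum] at h2 ⊢
      linarith
  -- stability
  have hstab : ∀ t, 1 ≤ t → t ≤ T → ⟪g t, θ t - θ (t+1)⟫ ≤ η * ‖g t‖^2 := by
    intro t h1t htT
    have hteq : t - 1 + 1 = t := by omega
    have hmprev := hmin (t-1) (by omega)
    rw [hteq] at hmprev
    have hmcur := hmin t htT
    have hB1 := my_strong_min (hstrong (t-1)) hmprev.1 hmprev.2 hmcur.1
    have hB2 := my_strong_min (hstrong t) hmcur.1 hmcur.2 hmprev.1
    have hdiff : ∀ v : EuclideanSpace ℝ (Fin n), φ' t v - φ' (t-1) v = η * ⟪g t, v⟫ := by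
      intro v
      rw [hφrw, hφrw]
      have hrw := Finset.sum_Icc_succ_top (a := 1) (b := t - 1) (by omega)
        (fun s => (⟪g s, v⟫ : ℝ))
      rw [hteq] at hrw
      rw [hrw]
      ring
    have e1 := hdiff (θ t)
    have e2 := hdiff (θ (t+1))
    set d := ‖θ t - θ (t+1)‖ with hdd
    have hnr : ‖θ (t+1) - θ t‖ = d := norm_sub_rev _ _
    rw [hnr] at hB1
    have hdsq : d^2 ≤ η * ⟪g t, θ t⟫ - η * ⟪g t, θ (t+1)⟫ := by
      have hB1' := hB1
      have hB2' := hB2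
      rw [hφrw, hφrw] at hB1' hB2'
      rw [hφrw, hφrw] at e1 e2
      linarith
    have hcs : ⟪g t, θ t - θ (t+1)⟫ ≤ ‖g t‖ * d := real_inner_le_norm _ _
    have hip : ⟪g t, θ t - θ (t+1)⟫ = ⟪g t, θ t⟫ - ⟪g t, θ (t+1)⟫ := inner_sub_right _ _ _
    have hd0 : 0 ≤ d := norm_nonneg _
    have hg0 : 0 ≤ ‖g t‖ := norm_nonneg _
    have hdle : d ≤ η * ‖g t‖ := by
      rcases eq_or_lt_of_le hd0 with hdz | hdp
      · rw [← hdz]; positivity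
      · have hmul : d * d ≤ (η * ‖g t‖) * d := by nlinarith
        exact le_of_mul_le_mul_right hmul hdp
    nlinarith [mul_le_mul_of_nonneg_left hdle hg0]
  -- gradient inequality
  have hgrad : ∀ t, f t (θ t) - f t u ≤ ⟪g t, θ t - u⟫ := by
    intro t
    rw [hg t]
    exact my_grad_ineq (hf_cvx t) (hf_diff t) _ _
  -- assemble
  have hmain : (∑ t ∈ Finset.Icc 1 T, f t (θ t)) - (∑ t ∈ Finset.Icc 1 T, f t u) ≤
      (T : ℝ) * (η * G^2) + D^2 / η := by
    calc (∑ t ∈ Finset.Icc 1 T, f t (θ t)) - (∑ t ∈ Finset.Icc 1 T, f t u)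
        = ∑ t ∈ Finset.Icc 1 T, (f t (θ t) - f t u) := (Finset.sum_sub_distrib _ _).symm
      _ ≤ ∑ t ∈ Finset.Icc 1 T, (⟪g t, θ t - θ (t+1)⟫ + ⟪g t, θ (t+1) - u⟫) := by
          apply Finset.sum_le_sum
          intro t _
          have h := hgrad t
          have hsplit : (⟪g t, θ t - u⟫ : ℝ) =
              ⟪g t, θ t - θ (t+1)⟫ + ⟪g t, θ (t+1) - u⟫ := by
            rw [← inner_add_right]
            congr 1
            abel
          linarith [hsplit ▸ h]
      _ = (∑ t ∈ Finset.Icc 1 T, ⟪g t, θ t - θ (t+1)⟫) +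
            ∑ t ∈ Finset.Icc 1 T, ⟪g t, θ (t+1) - u⟫ := Finset.sum_add_distrib
      _ ≤ (∑ t ∈ Finset.Icc 1 T, η * G^2) + D^2 / η := by
          apply add_le_add
          · apply Finset.sum_le_sum
            intro t ht
            rw [Finset.mem_Icc] at ht
            have h1 := hstab t ht.1 ht.2
            have h2 := hGbd t ht.1 ht.2
            have h3 : ‖g t‖^2 ≤ G^2 := pow_le_pow_left₀ (norm_nonneg _) h2 2
            exact h1.trans (mul_le_mul_of_nonneg_left h3 hηpos.le)
          · rw [le_div_iff₀ hηpos]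
            calc (∑ t ∈ Finset.Icc 1 T, (⟪g t, θ (t+1) - u⟫ : ℝ)) * η
                = ∑ t ∈ Finset.Icc 1 T, (⟪g t, θ (t+1) - u⟫ : ℝ) * η := by rw [Finset.sum_mul]
              _ = (∑ t ∈ Finset.Icc 1 T, η * ⟪g t, θ (t+1)⟫) -
                    ∑ t ∈ Finset.Icc 1 T, η * ⟪g t, u⟫ := by
                  rw [← Finset.sum_sub_distrib]
                  apply Finset.sum_congr rfl
                  intro t _
                  rw [inner_sub_right]
                  ring
              _ ≤ R u - R (θ 1) := by linarith [hBTL T le_rfl u hu]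
              _ ≤ D^2 := hDbd
      _ = (T : ℝ) * (η * G^2) + D^2 / η := by
          rw [Finset.sum_const, Nat.card_Icc]
          simp only [Nat.add_sub_cancel, nsmul_eq_mul]
  refine hmain.trans ?_
  have hs2 : Real.sqrt (2 * T) ^ 2 = 2 * T := Real.sq_sqrt hTpos.le
  have hT1' : (1:ℝ) ≤ T := by exact_mod_cast hT1
  set s := Real.sqrt (2 * T) with hsdef
  have hGne : G ≠ 0 := ne_of_gt hG
  have hDne : D ≠ 0 := ne_of_gt hD
  have hsne : s ≠ 0 := ne_of_gt hsT
  rw [hη]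
  have e1 : (T:ℝ) * (D / (G * s) * G ^ 2) = (T:ℝ) * D * G / s := by
    field_simp
  have e2 : D ^ 2 / (D / (G * s)) = D * G * s := by
    field_simp
  rw [e1, e2]
  have e3 : (T:ℝ) * D * G / s ≤ D * G * s := by
    rw [div_le_iff₀ hsT]
    nlinarith [hs2, mul_nonneg (mul_nonneg hD.le hG.le) (by linarith : (0:ℝ) ≤ (T:ℝ))]
  nlinarith [mul_pos (mul_pos hD hG) hsT]
end
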